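/- Let d₁ and d₂ be odd integers with d₁, d₂ ≥ 3, and let ρ₁ and ρ₂ be density matrices on ℂ^{d₁} and ℂ^{d₂} respectively. Then the discrete Wigner function of the tensor (Kronecker) product factorizes: W_{(p₁,p₂)(q₁,q₂)}(ρ₁ ⊗ ρ₂) = W_{p₁q₁}(ρ₁) · W_{p₂q₂}(ρ₂) for all p₁, q₁ ∈ ℤ_{d₁} and p₂, q₂ ∈ ℤ_{d₂}. Consequently ‖ρ₁ ⊗ ρ₂‖_W = ‖ρ₁‖_W · ‖ρ₂‖_W, so the mana is additive: M(ρ₁ ⊗ ρ₂) = M(ρ₁) + M(ρ₂). -/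

import Mathlib

open Matrix BigOperators ComplexOrder

noncomputable section

/-- The primitive `d`-th root of unity `ω = exp(2πi/d)`. -/
def omega (d : ℕ) : ℂ := Complex.exp (2 * Real.pi * Complex.I / d)

/-- The clock operator `Z = Σ_m ω^m |m⟩⟨m|`. -/
def clockOp (d : ℕ) [NeZero d] : Matrix (ZMod d) (ZMod d) ℂ :=
  Matrix.diagonal fun m => omega d ^ m.val

/-- The shift operator `X = Σ_m |m+1 mod d⟩⟨m|`. -/
def shiftOp (d : ℕ) [NeZero d] : Matrix (ZMod d) (ZMod d) ℂ :=
  Matrix.of fun i j => if i = j + 1 then 1 else 0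

/-- The generalized Pauli operator `T_{pq} = ω^{((d+1)/2)·pq} Z^p X^q`. -/
def genPauli (d : ℕ) [NeZero d] (p q : ZMod d) : Matrix (ZMod d) (ZMod d) ℂ :=
  (omega d ^ (((d + 1) / 2) * p.val * q.val)) • (clockOp d ^ p.val * shiftOp d ^ q.val)

/-- The discrete Wigner function
`W_{pq}(ρ) = d⁻¹ Σ_{p',q'} ω^{pq' − p'q} Tr(ρ T_{p'q'})`. -/
def wigner (d : ℕ) [NeZero d] (ρ : Matrix (ZMod d) (ZMod d) ℂ) (p q : ZMod d) : ℂ :=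
  (d : ℂ)⁻¹ * ∑ p' : ZMod d, ∑ q' : ZMod d,
    omega d ^ ((p.val * q'.val : ℤ) - (p'.val * q.val : ℤ)) * (ρ * genPauli d p' q').trace

/-- The Wigner norm `‖ρ‖_W = Σ_{pq} |W_{pq}(ρ)|`. -/
def wignerNorm (d : ℕ) [NeZero d] (ρ : Matrix (ZMod d) (ZMod d) ℂ) : ℝ :=
  ∑ p : ZMod d, ∑ q : ZMod d, ‖wigner d ρ p q‖

/-- The trace norm of a matrix: the sum of its singular values, i.e. the sum of the
square roots of the eigenvalues of `Aᴴ A`. -/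
def traceNorm (d : ℕ) [NeZero d] (A : Matrix (ZMod d) (ZMod d) ℂ) : ℝ :=
  ∑ i, Real.sqrt ((Matrix.posSemidef_conjTranspose_mul_self A).1.eigenvalues i)

/-- A density matrix: positive semidefinite with unit trace. -/
def IsDensityMatrix (d : ℕ) [NeZero d] (ρ : Matrix (ZMod d) (ZMod d) ℂ) : Prop :=
  ρ.PosSemidef ∧ ρ.trace = 1

open Kronecker

/-- The discrete Wigner function of a state on the composite system `ℂ^{d₁} ⊗ ℂ^{d₂}`. -/
def wigner2 (d₁ d₂ : ℕ) [NeZero d₁] [NeZero d₂]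
    (ρ : Matrix (ZMod d₁ × ZMod d₂) (ZMod d₁ × ZMod d₂) ℂ)
    (p₁ : ZMod d₁) (p₂ : ZMod d₂) (q₁ : ZMod d₁) (q₂ : ZMod d₂) : ℂ :=
  ((d₁ : ℂ) * (d₂ : ℂ))⁻¹ * ∑ p₁' : ZMod d₁, ∑ q₁' : ZMod d₁, ∑ p₂' : ZMod d₂, ∑ q₂' : ZMod d₂,
    omega d₁ ^ ((p₁.val * q₁'.val : ℤ) - (p₁'.val * q₁.val : ℤ)) *
      omega d₂ ^ ((p₂.val * q₂'.val : ℤ) - (p₂'.val * q₂.val : ℤ)) *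
      (ρ * (genPauli d₁ p₁' q₁' ⊗ₖ genPauli d₂ p₂' q₂')).trace

/-- The Wigner norm on the composite system. -/
def wignerNorm2 (d₁ d₂ : ℕ) [NeZero d₁] [NeZero d₂]
    (ρ : Matrix (ZMod d₁ × ZMod d₂) (ZMod d₁ × ZMod d₂) ℂ) : ℝ :=
  ∑ p₁ : ZMod d₁, ∑ p₂ : ZMod d₂, ∑ q₁ : ZMod d₁, ∑ q₂ : ZMod d₂,
    ‖wigner2 d₁ d₂ ρ p₁ p₂ q₁ q₂‖


section WignerAux

lemma omega_ne_zero' (d : ℕ) : omega d ≠ 0 := Complex.exp_ne_zero _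

lemma omega_prim' (d : ℕ) [NeZero d] : IsPrimitiveRoot (omega d) d :=
  Complex.isPrimitiveRoot_exp d (NeZero.ne d)

lemma zmod_sum_range' (d : ℕ) [NeZero d] (f : ℕ → ℂ) :
    ∑ p : ZMod d, f p.val = ∑ i ∈ Finset.range d, f i := by
  refine Finset.sum_nbij' (fun p : ZMod d => p.val) (fun n => (n : ZMod d)) ?_ ?_ ?_ ?_ ?_
  · intro a _; exact Finset.mem_range.2 (ZMod.val_lt a)
  · intro a _; exact Finset.mem_univ _
  · intro a _; simp [ZMod.natCast_val, ZMod.cast_id]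
  · intro a ha; exact ZMod.val_cast_of_lt (Finset.mem_range.1 ha)
  · intro a _; rfl

lemma rootSum' (d : ℕ) [NeZero d] {ζ : ℂ} (hζ : IsPrimitiveRoot ζ d) (c : ZMod d) :
    ∑ p : ZMod d, ζ ^ (p.val * c.val) = if c = 0 then (d : ℂ) else 0 := by
  have h1 : ∑ p : ZMod d, ζ ^ (p.val * c.val) = ∑ i ∈ Finset.range d, (ζ ^ c.val) ^ i := by
    rw [← zmod_sum_range' d (fun i => (ζ ^ c.val) ^ i)]
    exact Finset.sum_congr rfl fun p _ => by rw [← pow_mul, mul_comm]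
  rw [h1]
  split_ifs with hc
  · simp [hc, ZMod.val_zero]
  · have hne : ζ ^ c.val ≠ 1 :=
      hζ.pow_ne_one_of_pos_of_lt (by rwa [Ne, ZMod.val_eq_zero]) (ZMod.val_lt c)
    rw [geom_sum_eq hne, ← pow_mul, mul_comm, pow_mul, hζ.pow_eq_one, one_pow, sub_self, zero_div]

lemma genPauli_zero' (d : ℕ) [NeZero d] : genPauli d 0 0 = 1 := by
  simp [genPauli, ZMod.val_zero]

lemma sum_swap4' {α β γ δ : Type*} [Fintype α] [Fintype β] [Fintype γ] [Fintype δ]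
    (F : α → β → γ → δ → ℂ) :
    ∑ a : α, ∑ b : β, ∑ c : γ, ∑ e : δ, F a b c e
      = ∑ c : γ, ∑ e : δ, ∑ a : α, ∑ b : β, F a b c e := by
  have h1 : ∑ a : α, ∑ b : β, ∑ c : γ, ∑ e : δ, F a b c e
      = ∑ a : α, ∑ c : γ, ∑ b : β, ∑ e : δ, F a b c e :=
    Finset.sum_congr rfl fun a _ => Finset.sum_comm
  have h2 : ∑ a : α, ∑ c : γ, ∑ b : β, ∑ e : δ, F a b c e
      = ∑ c : γ, ∑ a : α, ∑ b : β, ∑ e : δ, F a b c e := Finset.sum_comm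
  have h3 : ∑ c : γ, ∑ a : α, ∑ b : β, ∑ e : δ, F a b c e
      = ∑ c : γ, ∑ a : α, ∑ e : δ, ∑ b : β, F a b c e :=
    Finset.sum_congr rfl fun c _ => Finset.sum_congr rfl fun a _ => Finset.sum_comm
  have h4 : ∑ c : γ, ∑ a : α, ∑ e : δ, ∑ b : β, F a b c e
      = ∑ c : γ, ∑ e : δ, ∑ a : α, ∑ b : β, F a b c e :=
    Finset.sum_congr rfl fun c _ => Finset.sum_comm
  rw [h1, h2, h3, h4]

lemma sum_mul_mul' {α β : Type*} [Fintype α] [Fintype β] (a : α → ℂ) (b : β → ℂ) (t : ℂ) :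
    ∑ p : α, ∑ q : β, a p * (b q * t) = (∑ p : α, a p) * ((∑ q : β, b q) * t) := by
  rw [Finset.sum_mul]
  refine Finset.sum_congr rfl fun p _ => ?_
  rw [Finset.sum_mul, Finset.mul_sum]

lemma sum_wigner' (d : ℕ) [NeZero d] (ρ : Matrix (ZMod d) (ZMod d) ℂ) :
    ∑ p : ZMod d, ∑ q : ZMod d, wigner d ρ p q = (d : ℂ) * ρ.trace := by
  have hω := omega_ne_zero' d
  have hd : (d : ℂ) ≠ 0 := Nat.cast_ne_zero.2 (NeZero.ne d)
  have hsplit : ∀ p q p' q' : ZMod d,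
      omega d ^ ((p.val * q'.val : ℤ) - (p'.val * q.val : ℤ))
        = omega d ^ (p.val * q'.val) * (omega d)⁻¹ ^ (q.val * p'.val) := by
    intro p q p' q'
    have h1 : ((p.val : ℤ) * q'.val) = ((p.val * q'.val : ℕ) : ℤ) := by push_cast; ring
    have h2 : ((p'.val : ℤ) * q.val) = ((q.val * p'.val : ℕ) : ℤ) := by push_cast; ring
    rw [zpow_sub₀ hω, h1, h2, zpow_natCast, zpow_natCast, div_eq_mul_inv, inv_pow]
  have key : ∑ p : ZMod d, ∑ q : ZMod d, ∑ p' : ZMod d, ∑ q' : ZMod d,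
      omega d ^ (p.val * q'.val) * ((omega d)⁻¹ ^ (q.val * p'.val) * (ρ * genPauli d p' q').trace)
      = (d : ℂ) * ((d : ℂ) * ρ.trace) := by
    rw [sum_swap4']
    have inner : ∀ p' q' : ZMod d,
        ∑ p : ZMod d, ∑ q : ZMod d, omega d ^ (p.val * q'.val) *
          ((omega d)⁻¹ ^ (q.val * p'.val) * (ρ * genPauli d p' q').trace)
        = (if q' = 0 then (d : ℂ) else 0) *
            ((if p' = 0 then (d : ℂ) else 0) * (ρ * genPauli d p' q').trace) := by
      intro p' q'
      rw [sum_mul_mul' (fun p : ZMod d => omega d ^ (p.val * q'.val))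
        (fun q : ZMod d => (omega d)⁻¹ ^ (q.val * p'.val)) ((ρ * genPauli d p' q').trace),
        rootSum' d (omega_prim' d) q', rootSum' d (omega_prim' d).inv p']
    simp only [inner]
    rw [Finset.sum_eq_single 0, Finset.sum_eq_single 0]
    · simp [genPauli_zero']
    · intro q' _ hq'; simp [hq']
    · intro h; exact absurd (Finset.mem_univ _) h
    · intro p' _ hp'; simp [hp']
    · intro h; exact absurd (Finset.mem_univ _) h
  have expand : ∑ p : ZMod d, ∑ q : ZMod d, wigner d ρ p q
      = (d : ℂ)⁻¹ * ∑ p : ZMod d, ∑ q : ZMod d, ∑ p' : ZMod d, ∑ q' : ZMod d,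
        omega d ^ (p.val * q'.val) * ((omega d)⁻¹ ^ (q.val * p'.val) * (ρ * genPauli d p' q').trace) := by
    rw [Finset.mul_sum]
    refine Finset.sum_congr rfl fun p _ => ?_
    rw [Finset.mul_sum]
    refine Finset.sum_congr rfl fun q _ => ?_
    simp only [wigner, hsplit, mul_assoc]
  rw [expand, key]
  field_simp

lemma wignerNorm_pos' (d : ℕ) [NeZero d] (ρ : Matrix (ZMod d) (ZMod d) ℂ)
    (hρ : ρ.trace = 1) : 0 < wignerNorm d ρ := by
  have h1 : ‖∑ p : ZMod d, ∑ q : ZMod d, wigner d ρ p q‖ ≤ wignerNorm d ρ := by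
    refine (norm_sum_le _ _).trans ?_
    exact Finset.sum_le_sum fun p _ => norm_sum_le _ _
  rw [sum_wigner' d ρ, hρ, mul_one] at h1
  simp only [Complex.norm_natCast] at h1
  have : (0 : ℝ) < d := by exact_mod_cast Nat.pos_of_ne_zero (NeZero.ne d)
  linarith

lemma wig_fact' (d₁ d₂ : ℕ) [NeZero d₁] [NeZero d₂]
    (ρ₁ : Matrix (ZMod d₁) (ZMod d₁) ℂ) (ρ₂ : Matrix (ZMod d₂) (ZMod d₂) ℂ)
    (p₁ q₁ : ZMod d₁) (p₂ q₂ : ZMod d₂) :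
    wigner2 d₁ d₂ (ρ₁ ⊗ₖ ρ₂) p₁ p₂ q₁ q₂ = wigner d₁ ρ₁ p₁ q₁ * wigner d₂ ρ₂ p₂ q₂ := by
  simp only [wigner2, wigner, ← Matrix.mul_kronecker_mul, Matrix.trace_kronecker]
  rw [mul_inv]
  rw [show ((d₁:ℂ)⁻¹ * ∑ p' : ZMod d₁, ∑ q' : ZMod d₁,
      omega d₁ ^ ((p₁.val * q'.val : ℤ) - (p'.val * q₁.val : ℤ)) * (ρ₁ * genPauli d₁ p' q').trace) *
      ((d₂:ℂ)⁻¹ * ∑ p' : ZMod d₂, ∑ q' : ZMod d₂,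
      omega d₂ ^ ((p₂.val * q'.val : ℤ) - (p'.val * q₂.val : ℤ)) * (ρ₂ * genPauli d₂ p' q').trace)
      = (d₁:ℂ)⁻¹ * (d₂:ℂ)⁻¹ * ((∑ p' : ZMod d₁, ∑ q' : ZMod d₁,
      omega d₁ ^ ((p₁.val * q'.val : ℤ) - (p'.val * q₁.val : ℤ)) * (ρ₁ * genPauli d₁ p' q').trace) *
      (∑ p' : ZMod d₂, ∑ q' : ZMod d₂,
      omega d₂ ^ ((p₂.val * q'.val : ℤ) - (p'.val * q₂.val : ℤ)) * (ρ₂ * genPauli d₂ p' q').trace))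
      from by ring]
  congr 1
  rw [Finset.sum_mul_sum]
  refine Finset.sum_congr rfl fun p₁' _ => ?_
  rw [Finset.sum_comm]
  refine Finset.sum_congr rfl fun p₂' _ => ?_
  rw [Finset.sum_mul_sum]
  refine Finset.sum_congr rfl fun q₁' _ => ?_
  refine Finset.sum_congr rfl fun q₂' _ => ?_
  ring

lemma sum_fact4' {α β γ δ : Type*} [Fintype α] [Fintype β] [Fintype γ] [Fintype δ]
    (f : α → β → ℝ) (g : γ → δ → ℝ) :
    ∑ a : α, ∑ b : β, ∑ c : γ, ∑ e : δ, f a b * g c e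
      = (∑ a : α, ∑ b : β, f a b) * (∑ c : γ, ∑ e : δ, g c e) := by
  rw [Finset.sum_mul_sum]
  refine Finset.sum_congr rfl fun a _ => ?_
  rw [Finset.sum_comm]
  refine Finset.sum_congr rfl fun c _ => ?_
  rw [Finset.sum_mul_sum]

end WignerAux

/-- the Wigner function factorizes over tensor products; consequently the
Wigner norm is multiplicative and the mana is additive. -/
theorem wigner_kronecker_factorizes (d₁ d₂ : ℕ) [NeZero d₁] [NeZero d₂]
    (hodd₁ : Odd d₁) (hd₁ : 3 ≤ d₁) (hodd₂ : Odd d₂) (hd₂ : 3 ≤ d₂)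
    (ρ₁ : Matrix (ZMod d₁) (ZMod d₁) ℂ) (ρ₂ : Matrix (ZMod d₂) (ZMod d₂) ℂ)
    (hρ₁ : IsDensityMatrix d₁ ρ₁) (hρ₂ : IsDensityMatrix d₂ ρ₂) :
    (∀ (p₁ q₁ : ZMod d₁) (p₂ q₂ : ZMod d₂),
        wigner2 d₁ d₂ (ρ₁ ⊗ₖ ρ₂) p₁ p₂ q₁ q₂ = wigner d₁ ρ₁ p₁ q₁ * wigner d₂ ρ₂ p₂ q₂) ∧
      wignerNorm2 d₁ d₂ (ρ₁ ⊗ₖ ρ₂) = wignerNorm d₁ ρ₁ * wignerNorm d₂ ρ₂ ∧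
      Real.log (wignerNorm2 d₁ d₂ (ρ₁ ⊗ₖ ρ₂)) =
        Real.log (wignerNorm d₁ ρ₁) + Real.log (wignerNorm d₂ ρ₂) := by
  have hfact : ∀ (p₁ q₁ : ZMod d₁) (p₂ q₂ : ZMod d₂),
      wigner2 d₁ d₂ (ρ₁ ⊗ₖ ρ₂) p₁ p₂ q₁ q₂ = wigner d₁ ρ₁ p₁ q₁ * wigner d₂ ρ₂ p₂ q₂ :=
    fun p₁ q₁ p₂ q₂ => wig_fact' d₁ d₂ ρ₁ ρ₂ p₁ q₁ p₂ q₂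
  have hnorm : wignerNorm2 d₁ d₂ (ρ₁ ⊗ₖ ρ₂) = wignerNorm d₁ ρ₁ * wignerNorm d₂ ρ₂ := by
    unfold wignerNorm2 wignerNorm
    have step1 : ∑ p₁ : ZMod d₁, ∑ p₂ : ZMod d₂, ∑ q₁ : ZMod d₁, ∑ q₂ : ZMod d₂,
        ‖wigner2 d₁ d₂ (ρ₁ ⊗ₖ ρ₂) p₁ p₂ q₁ q₂‖
        = ∑ p₁ : ZMod d₁, ∑ q₁ : ZMod d₁, ∑ p₂ : ZMod d₂, ∑ q₂ : ZMod d₂,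
        ‖wigner d₁ ρ₁ p₁ q₁‖ * ‖wigner d₂ ρ₂ p₂ q₂‖ := by
      refine (Finset.sum_congr rfl fun p₁ _ => Finset.sum_comm).trans ?_
      refine Finset.sum_congr rfl fun p₁ _ => Finset.sum_congr rfl fun q₁ _ =>
        Finset.sum_congr rfl fun p₂ _ => Finset.sum_congr rfl fun q₂ _ => ?_
      rw [hfact p₁ q₁ p₂ q₂, norm_mul]
    rw [step1, sum_fact4']
  have hpos₁ : 0 < wignerNorm d₁ ρ₁ := wignerNorm_pos' d₁ ρ₁ hρ₁.2
  have hpos₂ : 0 < wignerNorm d₂ ρ₂ := wignerNorm_pos' d₂ ρ₂ hρ₂.2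
  refine ⟨hfact, hnorm, ?_⟩
  rw [hnorm, Real.log_mul (ne_of_gt hpos₁) (ne_of_gt hpos₂)]


end
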